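/- Let P be a multivariate polynomial over ℂ in variables indexed by the entries of a 2 × 2 matrix, and suppose P is invariant under left and right multiplication by SL₂(ℂ): for all matrices u, v, A ∈ M₂(ℂ) with det u = 1 and det v = 1, the evaluation of P at u·A·v equals the evaluation of P at A. Then there exists a single-variable polynomial q over ℂ such that for every A ∈ M₂(ℂ), the evaluation of P at A equals q(det A). -/
import Mathlib

open MvPolynomial

set_option maxRecDepth 10000

private noncomputable def detP : MvPolynomial (Fin 2 × Fin 2) ℂ :=
  X (0, 0) * X (1, 1) - X (0, 1) * X (1, 0)

private lemma eval_detP (A : Matrix (Fin 2) (Fin 2) ℂ) :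
    MvPolynomial.eval (fun p => A p.1 p.2) detP = A.det := by
  simp [detP, Matrix.det_fin_two]

/-- Every `(SL₂ × SL₂)`-invariant polynomial function on `M₂(ℂ)` is a polynomial in the
determinant: if `P` in the matrix-entry variables satisfies `P(u · A · v) = P(A)` for all
`u, v` of determinant `1`, then there is a one-variable polynomial `q` with
`P(A) = q(det A)` for all `A`. -/
theorem invariant_poly_is_poly_in_det
    (P : MvPolynomial (Fin 2 × Fin 2) ℂ)
    (hP : ∀ u v A : Matrix (Fin 2) (Fin 2) ℂ, u.det = 1 → v.det = 1 →
      MvPolynomial.eval (fun p => (u * A * v) p.1 p.2) P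
        = MvPolynomial.eval (fun p => A p.1 p.2) P) :
    ∃ q : Polynomial ℂ, ∀ A : Matrix (Fin 2) (Fin 2) ℂ,
      MvPolynomial.eval (fun p => A p.1 p.2) P = Polynomial.eval A.det q := by
  classical
  -- `g` sends the variable `(0,0)` to `X` and describes `diag(X, 1)`.
  set g : Fin 2 × Fin 2 → Polynomial ℂ :=
    fun p => if p = (0, 0) then Polynomial.X else if p = (1, 1) then 1 else 0 with hg
  set q : Polynomial ℂ := MvPolynomial.eval₂ Polynomial.C g P with hq
  -- evaluation of `q` at `t` is `P(diag(t,1))`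
  have hqeval : ∀ t : ℂ,
      Polynomial.eval t q
        = MvPolynomial.eval (fun p => Polynomial.eval t (g p)) P := by
    intro t
    rw [hq]
    show (Polynomial.evalRingHom t) (MvPolynomial.eval₂ Polynomial.C g P) = _
    rw [MvPolynomial.eval₂_comp_left]
    have h1 : (Polynomial.evalRingHom t).comp (Polynomial.C : ℂ →+* Polynomial ℂ)
        = RingHom.id ℂ := by ext a; simp
    rw [h1]
    rfl
  -- the diagonal matrix diag(t, 1)
  have hdiagP : ∀ t : ℂ,
      (fun p : Fin 2 × Fin 2 => (Matrix.of ![![t, 0], ![0, 1]]) p.1 p.2)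
        = fun p => Polynomial.eval t (g p) := by
    intro t
    funext p
    fin_cases p <;> simp [hg]
  -- the key case: nonzero determinant
  have key : ∀ A : Matrix (Fin 2) (Fin 2) ℂ, A.det ≠ 0 →
      MvPolynomial.eval (fun p => A p.1 p.2) P = Polynomial.eval A.det q := by
    intro A hA
    set D : Matrix (Fin 2) (Fin 2) ℂ := Matrix.of ![![A.det, 0], ![0, 1]] with hD
    have hdetD : D.det = A.det := by simp [hD, Matrix.det_fin_two]
    have hDu : IsUnit D.det := by rw [hdetD]; exact isUnit_iff_ne_zero.2 hA
    set u : Matrix (Fin 2) (Fin 2) ℂ := A * D⁻¹ with hu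
    have hudet : u.det = 1 := by
      rw [hu, Matrix.det_mul, Matrix.det_nonsing_inv, hdetD,
        Ring.inverse_eq_inv]
      field_simp
    have hA' : u * D * 1 = A := by
      rw [mul_one, hu, Matrix.nonsing_inv_mul_cancel_right _ _ hDu]
    have := hP u 1 D hudet (by simp)
    rw [hA'] at this
    rw [this, hqeval, hdiagP]
  -- extend to all matrices by a polynomial-identity argument
  -- Q is the mv-polynomial `q(det)`
  set Q : MvPolynomial (Fin 2 × Fin 2) ℂ := Polynomial.eval₂ MvPolynomial.C detP q
    with hQ
  have hQeval : ∀ x : Fin 2 × Fin 2 → ℂ,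
      MvPolynomial.eval x Q = Polynomial.eval (MvPolynomial.eval x detP) q := by
    intro x
    have := Polynomial.hom_eval₂ q (MvPolynomial.C : ℂ →+* MvPolynomial (Fin 2 × Fin 2) ℂ)
      (MvPolynomial.eval x) detP
    rw [hQ, this]
    have hcomp : (MvPolynomial.eval x).comp (MvPolynomial.C : ℂ →+* MvPolynomial (Fin 2 × Fin 2) ℂ)
        = RingHom.id ℂ := by ext a; simp
    rw [hcomp]
    rfl
  have hzero : detP * (P - Q) = 0 := by
    apply MvPolynomial.funext (R := ℂ)
    intro x
    set A : Matrix (Fin 2) (Fin 2) ℂ := Matrix.of fun i j => x (i, j) with hA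
    have hx : x = fun p => A p.1 p.2 := by funext p; simp [hA]
    rw [map_mul, map_sub]
    by_cases h : A.det = 0
    · have : MvPolynomial.eval x detP = 0 := by rw [hx, eval_detP, h]
      simp [this]
    · have h1 : MvPolynomial.eval x P = Polynomial.eval A.det q := by
        rw [hx]; exact key A h
      have h2 : MvPolynomial.eval x Q = Polynomial.eval A.det q := by
        rw [hQeval, hx, eval_detP]
      simp [h1, h2]
  have hdetP_ne : detP ≠ 0 := by
    intro h
    have := eval_detP (1 : Matrix (Fin 2) (Fin 2) ℂ)
    rw [h] at this
    simp at this
  have hPQ : P = Q := by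
    rcases mul_eq_zero.1 hzero with h | h
    · exact absurd h hdetP_ne
    · exact sub_eq_zero.1 h
  refine ⟨q, fun A => ?_⟩
  rw [hPQ, hQeval, eval_detP]
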